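/- Let F : D → ℝ^{s-1} be the map (t₁,…,t_{s-1}) ↦ (K₁,…,K_{s-1}), where K_i = ∏_{j=1,…,s, j≠i} t_j/(t_j - t_i) and t_s = 1. Then the determinant of the Jacobian matrix of F equals (s-1)! · ∏_{i=1}^{s-1} K_i/(t_s - t_i), which is nonzero on D = {0 < t₁ < ⋯ < t_{s-1} < 1}. Consequently F is locally injective on D. -/

import Mathlib

open Finset

lemma sum_pow_div_identity {x y : ℝ} (hxy : x ≠ y) (M : ℕ) :
    x ^ (M + 1) * (x - y)⁻¹ + y ^ (M + 1) * (y - x)⁻¹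
      = ∑ a ∈ range (M + 1), x ^ a * y ^ (M - a) := by
  have h : x - y ≠ 0 := sub_ne_zero.2 hxy
  have key := geom_sum₂_mul x y (M + 1)
  simp only [Nat.add_sub_cancel] at key
  have h2 : (y - x)⁻¹ = -(x - y)⁻¹ := by rw [← neg_sub x y, inv_neg]
  calc x ^ (M + 1) * (x - y)⁻¹ + y ^ (M + 1) * (y - x)⁻¹
      = (x ^ (M + 1) - y ^ (M + 1)) * (x - y)⁻¹ := by rw [h2]; ring
    _ = (∑ a ∈ range (M + 1), x ^ a * y ^ (M - a)) * ((x - y) * (x - y)⁻¹) := by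
        rw [← key]; ring
    _ = _ := by rw [mul_inv_cancel₀ h, mul_one]

lemma aux_detN (n : ℕ) (s : Fin n → ℝ) (hs : ∀ i j : Fin n, i ≠ j → s i ≠ s j) :
    (Matrix.of fun i j : Fin n =>
      if j = i then 1 + s i * ∑ k ∈ univ.erase i, (s i - s k)⁻¹
      else s j / (s j - s i)).det = (n.factorial : ℝ) := by
  set N : Matrix (Fin n) (Fin n) ℝ := Matrix.of fun i j : Fin n =>
      if j = i then 1 + s i * ∑ k ∈ univ.erase i, (s i - s k)⁻¹
      else s j / (s j - s i) with hN
  set T : Matrix (Fin n) (Fin n) ℝ := Matrix.of fun r m : Fin n =>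
      if (r : ℕ) = (m : ℕ) then (n : ℝ) - (m : ℕ)
      else if (r : ℕ) < (m : ℕ) then ∑ k, s k ^ ((m : ℕ) - (r : ℕ)) else 0 with hT
  have hNW : N * Matrix.vandermonde s = Matrix.vandermonde s * T := by
    ext i m
    rw [Matrix.mul_apply, Matrix.mul_apply]
    set M : ℕ := (m : ℕ) with hMdef
    have hM : M < n := m.isLt
    have lhs_eq : ∑ j, N i j * Matrix.vandermonde s j m
        = s i ^ M + ∑ a ∈ range (M + 1),
            ((∑ k, s k ^ a) - s i ^ a) * s i ^ (M - a) := by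
      rw [← Finset.sum_erase_add univ _ (mem_univ i)]
      have h1 : ∑ j ∈ univ.erase i, N i j * Matrix.vandermonde s j m
          = ∑ j ∈ univ.erase i, s j ^ (M + 1) * (s j - s i)⁻¹ := by
        refine Finset.sum_congr rfl fun j hj => ?_
        have hji : j ≠ i := Finset.ne_of_mem_erase hj
        rw [hN, Matrix.of_apply, if_neg hji, Matrix.vandermonde_apply, div_eq_mul_inv]
        ring
      have h2 : N i i * Matrix.vandermonde s i m
          = s i ^ M + ∑ k ∈ univ.erase i, s i ^ (M + 1) * (s i - s k)⁻¹ := by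
        rw [hN, Matrix.of_apply, if_pos rfl, Matrix.vandermonde_apply, add_mul, one_mul,
          mul_sum, sum_mul]
        congr 1
        refine Finset.sum_congr rfl fun k hk => ?_
        ring
      rw [h1, h2, ← add_assoc, add_comm (∑ j ∈ univ.erase i, s j ^ (M + 1) * (s j - s i)⁻¹),
        add_assoc, ← Finset.sum_add_distrib]
      congr 1
      calc ∑ x ∈ univ.erase i, (s x ^ (M + 1) * (s x - s i)⁻¹ + s i ^ (M + 1) * (s i - s x)⁻¹)
          = ∑ x ∈ univ.erase i, ∑ a ∈ range (M + 1), s x ^ a * s i ^ (M - a) := by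
            refine Finset.sum_congr rfl fun x hx => ?_
            exact sum_pow_div_identity (hs x i (Finset.ne_of_mem_erase hx)) M
        _ = ∑ a ∈ range (M + 1), ∑ x ∈ univ.erase i, s x ^ a * s i ^ (M - a) :=
            Finset.sum_comm
        _ = ∑ a ∈ range (M + 1), ((∑ k, s k ^ a) - s i ^ a) * s i ^ (M - a) := by
            refine Finset.sum_congr rfl fun a ha => ?_
            rw [← Finset.sum_mul]
            congr 1
            have h3 := Finset.sum_erase_add univ (fun k => s k ^ a) (mem_univ i)
            linarith
    have rhs_eq : ∑ r, Matrix.vandermonde s i r * T r m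
        = (∑ a ∈ range M, (∑ k, s k ^ (a + 1)) * s i ^ (M - (a + 1)))
            + ((n : ℝ) - M) * s i ^ M := by
      have step1 : ∑ r, Matrix.vandermonde s i r * T r m
          = ∑ r ∈ range n, s i ^ r *
              (if r = M then (n : ℝ) - M else if r < M then ∑ k, s k ^ (M - r) else 0) := by
        rw [← Fin.sum_univ_eq_sum_range (fun r => s i ^ r *
              (if r = M then (n : ℝ) - M else if r < M then ∑ k, s k ^ (M - r) else 0)) n]
        refine Finset.sum_congr rfl fun r _ => ?_
        rw [Matrix.vandermonde_apply, hT, Matrix.of_apply]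
      have step2 : ∑ r ∈ range n, s i ^ r *
              (if r = M then (n : ℝ) - M else if r < M then ∑ k, s k ^ (M - r) else 0)
          = ∑ r ∈ range (M + 1), s i ^ r *
              (if r = M then (n : ℝ) - M else if r < M then ∑ k, s k ^ (M - r) else 0) := by
        refine (Finset.sum_subset (Finset.range_subset_range.2 hM) fun r hr hnr => ?_).symm
        have h4 : M < r := by
          simp only [Finset.mem_range] at hr hnr; omega
        rw [if_neg (by omega), if_neg (by omega), mul_zero]
      rw [step1, step2, Finset.sum_range_succ, if_pos rfl]
      congr 1
      · calc ∑ r ∈ range M, s i ^ r *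
              (if r = M then (n : ℝ) - M else if r < M then ∑ k, s k ^ (M - r) else 0)
            = ∑ r ∈ range M, s i ^ r * (∑ k, s k ^ (M - r)) := by
              refine Finset.sum_congr rfl fun r hr => ?_
              have h5 : r < M := Finset.mem_range.1 hr
              rw [if_neg (by omega), if_pos h5]
          _ = ∑ a ∈ range M, s i ^ (M - 1 - a) * (∑ k, s k ^ (M - (M - 1 - a))) :=
              (Finset.sum_range_reflect (fun r => s i ^ r * (∑ k, s k ^ (M - r))) M).symm
          _ = ∑ a ∈ range M, (∑ k, s k ^ (a + 1)) * s i ^ (M - (a + 1)) := by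
              refine Finset.sum_congr rfl fun a ha => ?_
              have haM : a < M := Finset.mem_range.1 ha
              have h7 : M - (M - 1 - a) = a + 1 := by omega
              have h8 : M - 1 - a = M - (a + 1) := by omega
              rw [h7, h8, mul_comm]
      · ring
    rw [lhs_eq, rhs_eq]
    have e2 : ∑ a ∈ range (M + 1), ((∑ k, s k ^ a) - s i ^ a) * s i ^ (M - a)
        = (∑ a ∈ range (M + 1), (∑ k, s k ^ a) * s i ^ (M - a))
            - (M + 1 : ℝ) * s i ^ M := by
      have e3 : ∀ a ∈ range (M + 1), ((∑ k, s k ^ a) - s i ^ a) * s i ^ (M - a)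
          = (∑ k, s k ^ a) * s i ^ (M - a) - s i ^ M := by
        intro a ha
        have haM : a ≤ M := Nat.lt_succ_iff.1 (Finset.mem_range.1 ha)
        rw [sub_mul, ← pow_add, Nat.add_sub_cancel' haM]
      rw [Finset.sum_congr rfl e3, Finset.sum_sub_distrib, Finset.sum_const,
        Finset.card_range, nsmul_eq_mul]
      push_cast
      ring
    rw [e2, Finset.sum_range_succ']
    have e4 : (∑ k : Fin n, s k ^ 0) * s i ^ (M - 0) = (n : ℝ) * s i ^ M := by
      simp [Finset.card_univ]
    rw [e4]
    ring
  have hdetW : (Matrix.vandermonde s).det ≠ 0 := by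
    rw [Matrix.det_vandermonde_ne_zero_iff]
    intro a b hab
    by_contra hne
    exact hs a b hne hab
  have hTut : T.BlockTriangular id := by
    intro a b hab
    have : (b : ℕ) < (a : ℕ) := hab
    rw [hT, Matrix.of_apply, if_neg (by omega), if_neg (by omega)]
  have hdetT : T.det = (n.factorial : ℝ) := by
    rw [Matrix.det_of_upperTriangular hTut]
    have e5 : ∀ r : Fin n, T r r = (n : ℝ) - (r : ℕ) := fun r => by
      rw [hT, Matrix.of_apply, if_pos rfl]
    calc ∏ r : Fin n, T r r = ∏ r : Fin n, ((n : ℝ) - (r : ℕ)) :=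
          Finset.prod_congr rfl fun r _ => e5 r
      _ = ∏ r ∈ range n, ((n : ℝ) - r) :=
          Fin.prod_univ_eq_prod_range (fun r => (n : ℝ) - r) n
      _ = ∏ r ∈ range n, ((r : ℝ) + 1) := by
          rw [← Finset.prod_range_reflect]
          refine Finset.prod_congr rfl fun j hj => ?_
          have hj' : j < n := Finset.mem_range.1 hj
          have : ((n - 1 - j : ℕ) : ℝ) = (n : ℝ) - 1 - (j : ℝ) := by
            push_cast [Nat.cast_sub (by omega : 1 + j ≤ n)]
            rw [Nat.sub_sub]
            push_cast [Nat.cast_sub (by omega : 1 + j ≤ n)]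
            ring
          rw [this]
          ring
      _ = (n.factorial : ℝ) := by
          rw [← Finset.prod_range_add_one_eq_factorial, Nat.cast_prod]
          push_cast
          rfl
  have hmul : N.det * (Matrix.vandermonde s).det
      = T.det * (Matrix.vandermonde s).det := by
    rw [← Matrix.det_mul, hNW, Matrix.det_mul, mul_comm]
  have hfin := mul_right_cancel₀ hdetW hmul
  rw [hfin]
  exact hdetT

set_option maxHeartbeats 1000000 in
theorem jacobian_det_and_local_injectivity
    (n : ℕ)
    (K : Fin n → (Fin n → ℝ) → ℝ)
    (hK : ∀ i t, K i t =
      (1 / (1 - t i)) * ∏ j ∈ univ.erase i, t j / (t j - t i))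
    (F : (Fin n → ℝ) → (Fin n → ℝ))
    (hF : ∀ t i, F t i = K i t)
    (t : Fin n → ℝ)
    (hpos : ∀ j, 0 < t j) (hlt1 : ∀ j, t j < 1)
    (hmono : ∀ j k : Fin n, j < k → t j < t k) :
    Matrix.det (Matrix.of fun i j => fderiv ℝ (K i) t (Pi.single j 1)) =
      (n.factorial : ℝ) * ∏ i, K i t / (1 - t i) ∧
    Matrix.det (Matrix.of fun i j => fderiv ℝ (K i) t (Pi.single j 1)) ≠ 0 ∧
    ∃ U ∈ nhds t, Set.InjOn F U := by
  classical
  have htne : ∀ i j : Fin n, i ≠ j → t i ≠ t j := by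
    intro i j hij
    rcases hij.lt_or_gt with h | h
    · exact (hmono i j h).ne
    · exact (hmono j i h).ne'
  have ht0 : ∀ j, t j ≠ 0 := fun j => (hpos j).ne'
  have h1t : ∀ j, (1 : ℝ) - t j ≠ 0 := fun j => sub_ne_zero.2 (hlt1 j).ne'
  have hsub : ∀ i j : Fin n, j ≠ i → t j - t i ≠ 0 :=
    fun i j h => sub_ne_zero.2 (htne j i h)
  set s : Fin n → ℝ := fun j => 1 - t j with hs_def
  have hsne : ∀ i j : Fin n, i ≠ j → s i ≠ s j := by
    intro i j hij heq
    apply htne i j hij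
    simp only [hs_def] at heq
    linarith
  set Nm : Matrix (Fin n) (Fin n) ℝ := Matrix.of fun i j : Fin n =>
      if j = i then 1 + s i * ∑ k ∈ univ.erase i, (s i - s k)⁻¹
      else s j / (s j - s i) with hNm
  have hKfun : ∀ i, K i = fun u : Fin n → ℝ =>
      (1 - u i)⁻¹ * ∏ j ∈ univ.erase i, u j * (u j - u i)⁻¹ := by
    intro i; funext u; rw [hK]; simp only [one_div, div_eq_mul_inv, one_mul]
  set Pt : Fin n → ℝ := fun i => ∏ j ∈ univ.erase i, t j * (t j - t i)⁻¹ with hPt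
  have hPtne : ∀ i, Pt i ≠ 0 := by
    intro i
    rw [hPt]
    refine Finset.prod_ne_zero_iff.2 fun j hj => ?_
    exact mul_ne_zero (ht0 j) (inv_ne_zero (hsub i j (Finset.ne_of_mem_erase hj)))
  have hKval : ∀ i, K i t = (1 - t i)⁻¹ * Pt i := by
    intro i; rw [hKfun i]
  have hKne : ∀ i, K i t ≠ 0 := fun i => by
    rw [hKval i]; exact mul_ne_zero (inv_ne_zero (h1t i)) (hPtne i)
  set Jm : Matrix (Fin n) (Fin n) ℝ := Matrix.of fun i j =>
      (K i t * t i) * (((t j) * (1 - t j))⁻¹ * Nm i j) with hJm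
  set L : (Fin n → ℝ) →L[ℝ] (Fin n → ℝ) :=
      LinearMap.toContinuousLinearMap (Matrix.toLin' Jm) with hL
  have hLsingle : ∀ i j, L (Pi.single j 1) i = Jm i j := by
    intro i j
    rw [hL]
    simp [Matrix.toLin'_apply, Matrix.mulVec_single]
  -- derivative of each K i
  have hproj : ∀ k : Fin n, HasStrictFDerivAt (fun u : Fin n → ℝ => u k)
      (ContinuousLinearMap.proj k : (Fin n → ℝ) →L[ℝ] ℝ) t :=
    fun k => hasStrictFDerivAt_apply k t
  have hKL : ∀ i, HasStrictFDerivAt (K i)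
      ((ContinuousLinearMap.proj i :
          (Fin n → ℝ) →L[ℝ] ℝ).comp L) t := by
    intro i
    have hfac : ∀ j ∈ univ.erase i, HasStrictFDerivAt
        (fun u : Fin n → ℝ => u j * (u j - u i)⁻¹)
        ((t j) • ((-((t j - t i) ^ 2)⁻¹) •
            ((ContinuousLinearMap.proj j : (Fin n → ℝ) →L[ℝ] ℝ)
              - ContinuousLinearMap.proj i))
          + ((t j - t i)⁻¹) • (ContinuousLinearMap.proj j :
              (Fin n → ℝ) →L[ℝ] ℝ)) t := by
      intro j hj
      have hji : j ≠ i := Finset.ne_of_mem_erase hj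
      have hinner : HasStrictFDerivAt (fun u : Fin n → ℝ => u j - u i)
          ((ContinuousLinearMap.proj j : (Fin n → ℝ) →L[ℝ] ℝ)
            - ContinuousLinearMap.proj i) t := (hproj j).sub (hproj i)
      have hinv : HasStrictFDerivAt (fun u : Fin n → ℝ => (u j - u i)⁻¹)
          ((-((t j - t i) ^ 2)⁻¹) •
            ((ContinuousLinearMap.proj j : (Fin n → ℝ) →L[ℝ] ℝ)
              - ContinuousLinearMap.proj i)) t :=
        (hasStrictDerivAt_inv (hsub i j hji)).comp_hasStrictFDerivAt t hinner
      exact (hproj j).mul hinv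
    have hprod : HasStrictFDerivAt
        (fun u : Fin n → ℝ => ∏ j ∈ univ.erase i, (u j * (u j - u i)⁻¹))
        (∑ j ∈ univ.erase i,
          (∏ k ∈ (univ.erase i).erase j, (t k * (t k - t i)⁻¹)) •
            ((t j) • ((-((t j - t i) ^ 2)⁻¹) •
              ((ContinuousLinearMap.proj j : (Fin n → ℝ) →L[ℝ] ℝ)
                - ContinuousLinearMap.proj i))
            + ((t j - t i)⁻¹) • (ContinuousLinearMap.proj j :
                (Fin n → ℝ) →L[ℝ] ℝ))) t :=
      HasStrictFDerivAt.finset_prod hfac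
    have hone : HasStrictFDerivAt (fun u : Fin n → ℝ => (1 : ℝ) - u i)
        ((0 : (Fin n → ℝ) →L[ℝ] ℝ) - ContinuousLinearMap.proj i) t :=
      (hasStrictFDerivAt_const (1 : ℝ) t).sub (hproj i)
    have hinv0 : HasStrictFDerivAt (fun u : Fin n → ℝ => (1 - u i)⁻¹)
        ((-((1 - t i) ^ 2)⁻¹) •
          ((0 : (Fin n → ℝ) →L[ℝ] ℝ) - ContinuousLinearMap.proj i)) t :=
      (hasStrictDerivAt_inv (h1t i)).comp_hasStrictFDerivAt t hone
    set DD : (Fin n → ℝ) →L[ℝ] ℝ := (((1 - t i)⁻¹) • (∑ j ∈ univ.erase i,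
            (∏ k ∈ (univ.erase i).erase j, (t k * (t k - t i)⁻¹)) •
              ((t j) • ((-((t j - t i) ^ 2)⁻¹) •
                ((ContinuousLinearMap.proj j : (Fin n → ℝ) →L[ℝ] ℝ)
                  - ContinuousLinearMap.proj i))
              + ((t j - t i)⁻¹) • (ContinuousLinearMap.proj j :
                  (Fin n → ℝ) →L[ℝ] ℝ)))
          + (∏ j ∈ univ.erase i, (t j * (t j - t i)⁻¹)) •
              ((-((1 - t i) ^ 2)⁻¹) •
                ((0 : (Fin n → ℝ) →L[ℝ] ℝ) - ContinuousLinearMap.proj i))) with hDD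
    have hD : HasStrictFDerivAt (K i) DD t := by
      rw [hKfun i]
      exact hinv0.mul hprod
    -- values of the derivative on basis vectors
    have hval : ∀ q, DD (Pi.single q 1) = Jm i q := by
      intro q
      rw [hDD]
      simp only [ContinuousLinearMap.add_apply, ContinuousLinearMap.smul_apply,
        ContinuousLinearMap.sum_apply,
        ContinuousLinearMap.sub_apply, ContinuousLinearMap.zero_apply,
        ContinuousLinearMap.proj_apply, smul_eq_mul, Pi.single_apply]
      by_cases hq : q = i
      · subst hq
        -- diagonal entry
        have hterm : ∀ j ∈ univ.erase q,
            (∏ k ∈ (univ.erase q).erase j, (t k * (t k - t q)⁻¹)) *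
              (t j * (-((t j - t q) ^ 2)⁻¹ *
                ((if j = q then (1:ℝ) else 0) - (if q = q then (1:ℝ) else 0)))
              + (t j - t q)⁻¹ * (if j = q then (1:ℝ) else 0))
            = Pt q * (t j - t q)⁻¹ := by
          intro j hj
          have hji : j ≠ q := Finset.ne_of_mem_erase hj
          have hprodrel : (∏ k ∈ (univ.erase q).erase j, (t k * (t k - t q)⁻¹)) *
              (t j * (t j - t q)⁻¹) = Pt q := by
            rw [hPt]
            exact Finset.prod_erase_mul _ _ hj
          rw [if_neg hji, if_pos rfl, ← hprodrel]
          have h2 := hsub q j hji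
          field_simp
          ring
        rw [Finset.sum_congr rfl hterm, ← Finset.mul_sum]
        rw [hJm, Matrix.of_apply, hNm, Matrix.of_apply, if_pos rfl, hKval q]
        have hsum : ∑ k ∈ univ.erase q, (s q - s k)⁻¹
            = ∑ k ∈ univ.erase q, (t k - t q)⁻¹ := by
          refine Finset.sum_congr rfl fun k hk => ?_
          congr 1
          simp only [hs_def]
          ring
        rw [hsum]
        have hPta : (∏ j ∈ univ.erase q, (t j * (t j - t q)⁻¹)) = Pt q := by rw [hPt]
        rw [hPta]
        simp only [hs_def]
        have e1 : t q ≠ 0 := ht0 q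
        have e2 : (1 : ℝ) - t q ≠ 0 := h1t q
        generalize (∑ k ∈ univ.erase q, (t k - t q)⁻¹) = S
        field_simp
        rw [if_pos trivial]
        ring
      · -- off-diagonal entry
        have hqmem : q ∈ univ.erase i := Finset.mem_erase.2 ⟨hq, mem_univ q⟩
        rw [Finset.sum_eq_single_of_mem q hqmem ?side]
        case side =>
          intro j hj hjq
          rw [if_neg hjq, if_neg (fun h : (i:Fin n) = q => hq h.symm)]
          simp
        rw [if_pos rfl, if_neg (fun h : (i:Fin n) = q => hq h.symm)]
        have hprodrel : (∏ k ∈ (univ.erase i).erase q, (t k * (t k - t i)⁻¹)) *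
            (t q * (t q - t i)⁻¹) = Pt i := by
          rw [hPt]
          exact Finset.prod_erase_mul _ _ hqmem
        have hPta : (∏ j ∈ univ.erase i, (t j * (t j - t i)⁻¹)) = Pt i := by rw [hPt]
        rw [hJm, Matrix.of_apply, hNm, Matrix.of_apply, if_neg hq, hKval i, hPta,
          ← hprodrel]
        simp only [hs_def]
        have h2 := hsub i q hq
        have h3 : (1 : ℝ) - t q - (1 - t i) = t i - t q := by ring
        rw [h3]
        have h4 : t i - t q ≠ 0 := sub_ne_zero.2 (htne i q fun h => hq h.symm)
        have e1 : t q ≠ 0 := ht0 q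
        have e2 : (1 : ℝ) - t q ≠ 0 := h1t q
        have e3 : (1 : ℝ) - t i ≠ 0 := h1t i
        have e4 : t i ≠ 0 := ht0 i
        generalize (∏ k ∈ (univ.erase i).erase q, (t k * (t k - t i)⁻¹)) = c
        field_simp
        ring
    have hLD : (ContinuousLinearMap.proj i :
          (Fin n → ℝ) →L[ℝ] ℝ).comp L = DD := by
      apply ContinuousLinearMap.ext
      intro v
      have hv : v = ∑ j, v j • (Pi.single j 1 : Fin n → ℝ) := by
        ext k
        simp [Pi.single_apply]
      conv_lhs => rw [hv]
      conv_rhs => rw [hv]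
      rw [map_sum, map_sum]
      refine Finset.sum_congr rfl fun j _ => ?_
      rw [map_smul, map_smul, hval j]
      have : ((ContinuousLinearMap.proj i :
          (Fin n → ℝ) →L[ℝ] ℝ).comp L) (Pi.single j 1) = Jm i j := by
        rw [ContinuousLinearMap.comp_apply, ContinuousLinearMap.proj_apply]
        exact hLsingle i j
      rw [this]
    rw [hLD]
    exact hD
  -- the matrix of partial derivatives is Jm
  have hmat : (Matrix.of fun i j => fderiv ℝ (K i) t (Pi.single j 1)) = Jm := by
    ext i j
    rw [Matrix.of_apply, (hKL i).hasFDerivAt.fderiv]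
    rw [ContinuousLinearMap.comp_apply, ContinuousLinearMap.proj_apply]
    exact hLsingle i j
  -- determinant computation
  have hdetN : Nm.det = (n.factorial : ℝ) := aux_detN n s hsne
  have hdetJ : Jm.det = (n.factorial : ℝ) * ∏ i, K i t / (1 - t i) := by
    have h1 : Jm = Matrix.of (fun i j => (K i t * t i) *
        ((Matrix.of fun i j => ((t j * (1 - t j))⁻¹) * Nm i j) i j)) := rfl
    rw [h1, Matrix.det_mul_column, Matrix.det_mul_row, hdetN]
    have h2 : (∏ i, (K i t * t i)) * (∏ j, ((t j * (1 - t j))⁻¹))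
        = ∏ i, K i t / (1 - t i) := by
      rw [← Finset.prod_mul_distrib]
      refine Finset.prod_congr rfl fun i _ => ?_
      have e1 : t i ≠ 0 := ht0 i
      have e2 : (1 : ℝ) - t i ≠ 0 := h1t i
      field_simp
    rw [← mul_assoc, h2, mul_comm]
  have hdetJne : Jm.det ≠ 0 := by
    rw [hdetJ]
    refine mul_ne_zero (Nat.cast_ne_zero.2 n.factorial_ne_zero) ?_
    exact Finset.prod_ne_zero_iff.2 fun i _ => div_ne_zero (hKne i) (h1t i)
  refine ⟨by rw [hmat, hdetJ], by rw [hmat]; exact hdetJne, ?_⟩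
  -- local injectivity
  have hdetL : L.det ≠ 0 := by
    have : L.det = Jm.det := by
      rw [hL]
      rw [ContinuousLinearMap.det]
      simp [LinearMap.det_toLin']
    rwa [this]
  have hFd : HasStrictFDerivAt F
      ((L.toContinuousLinearEquivOfDetNeZero hdetL :
        (Fin n → ℝ) ≃L[ℝ] (Fin n → ℝ)) :
        (Fin n → ℝ) →L[ℝ] (Fin n → ℝ)) t := by
    rw [ContinuousLinearMap.coe_toContinuousLinearEquivOfDetNeZero]
    apply hasStrictFDerivAt_pi''
    intro i
    have hFi : (fun u => F u i) = K i := funext fun u => hF u i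
    rw [hFi]
    exact hKL i
  refine ⟨(hFd.toOpenPartialHomeomorph F).source,
    (hFd.toOpenPartialHomeomorph F).open_source.mem_nhds
      hFd.mem_toOpenPartialHomeomorph_source, ?_⟩
  have hinj := (hFd.toOpenPartialHomeomorph F).injOn
  rwa [hFd.toOpenPartialHomeomorph_coe] at hinj
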